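/- arXiv:1904.08178 — 2 statements merged into one kernel-verified Lean document; each statement's English description precedes it below -/
import Mathlib

section
/- Let G(V,E,w) be a finite undirected weighted graph with possibly negative weights such that deg^-(u) ≤ Δ for every vertex u. Then the greedy peeling algorithm, which repeatedly removes a vertex of minimum induced degree d(v) = deg^+(v) − deg^-(v) from the current graph and returns the intermediate subgraph of maximum density, outputs a vertex set whose density w(S)/|S| is at least ρ*/2 − Δ/2, where ρ* = max_{∅ ≠ T ⊆ V} w(T)/|T|. -/
open Finset

variable {V : Type*} [Fintype V] [DecidableEq V]

/-- Induced (signed) degree of `v` within `S`. -/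
noncomputable def dDeg (w : V → V → ℝ) (S : Finset V) (v : V) : ℝ :=
  (∑ x ∈ S, max (w v x) 0) - (∑ x ∈ S, max (-(w v x)) 0)

/-- Induced weight of `S` (each edge counted once; `w` symmetric, zero diagonal). -/
noncomputable def indWeight (w : V → V → ℝ) (S : Finset V) : ℝ :=
  (∑ a ∈ S, ∑ b ∈ S, w a b) / 2

lemma dDeg_eq (w : V → V → ℝ) (S : Finset V) (v : V) :
    dDeg w S v = ∑ x ∈ S, w v x := by
  unfold dDeg
  rw [← Finset.sum_sub_distrib]
  exact Finset.sum_congr rfl fun x _ => max_zero_sub_eq_self _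

lemma sq_sum_erase (w : V → V → ℝ) (hsymm : ∀ u v, w u v = w v u)
    (hdiag : ∀ v, w v v = 0) (S : Finset V) (v : V) (hv : v ∈ S) :
    ∑ a ∈ S.erase v, ∑ b ∈ S.erase v, w a b
      = (∑ a ∈ S, ∑ b ∈ S, w a b) - 2 * ∑ b ∈ S, w v b := by
  have h1 : ∀ a : V, ∑ b ∈ S.erase v, w a b = ∑ b ∈ S, w a b - w a v :=
    fun a => Finset.sum_erase_eq_sub hv
  have h2 : ∑ a ∈ S.erase v, (∑ b ∈ S, w a b - w a v)
      = (∑ a ∈ S, (∑ b ∈ S, w a b - w a v)) - (∑ b ∈ S, w v b - w v v) :=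
    Finset.sum_erase_eq_sub hv
  have h3 : ∑ a ∈ S, w a v = ∑ a ∈ S, w v a :=
    Finset.sum_congr rfl fun a _ => hsymm a v
  calc ∑ a ∈ S.erase v, ∑ b ∈ S.erase v, w a b
      = ∑ a ∈ S.erase v, (∑ b ∈ S, w a b - w a v) :=
        Finset.sum_congr rfl fun a _ => h1 a
    _ = (∑ a ∈ S, (∑ b ∈ S, w a b - w a v)) - (∑ b ∈ S, w v b - w v v) := h2
    _ = (∑ a ∈ S, ∑ b ∈ S, w a b) - (∑ a ∈ S, w a v)
          - (∑ b ∈ S, w v b - w v v) := by rw [Finset.sum_sub_distrib]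
    _ = _ := by rw [h3, hdiag]; ring

lemma opt_vertex_deg (w : V → V → ℝ) (hsymm : ∀ u v, w u v = w v u)
    (hdiag : ∀ v, w v v = 0) (ρstar : ℝ)
    (hρ : IsGreatest {ρ : ℝ | ∃ T : Finset V, T.Nonempty ∧
      ρ = indWeight w T / (T.card : ℝ)} ρstar)
    (T : Finset V) (hTne : T.Nonempty)
    (hTρ : ρstar = indWeight w T / (T.card : ℝ)) (v : V) (hv : v ∈ T) :
    ρstar ≤ ∑ x ∈ T, w v x := by
  by_cases he : (T.erase v).Nonempty
  · have hub : indWeight w (T.erase v) / ((T.erase v).card : ℝ) ≤ ρstar :=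
      hρ.2 ⟨T.erase v, he, rfl⟩
    have hce : (T.erase v).card = T.card - 1 := Finset.card_erase_of_mem hv
    have hT2 : 2 ≤ T.card := by
      have h1 := Finset.card_pos.mpr he
      have h2 := Finset.card_pos.mpr hTne
      omega
    have hcast : ((T.erase v).card : ℝ) = (T.card : ℝ) - 1 := by
      rw [hce, Nat.cast_sub (by omega)]; norm_num
    have hcpos : (0:ℝ) < (T.card : ℝ) - 1 := by
      have : (2:ℝ) ≤ (T.card : ℝ) := by exact_mod_cast hT2
      linarith
    have hcpos' : (0:ℝ) < (T.card : ℝ) := by linarith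
    have hiw : indWeight w (T.erase v) = indWeight w T - ∑ x ∈ T, w v x := by
      unfold indWeight
      rw [sq_sum_erase w hsymm hdiag T v hv]; ring
    have hle : indWeight w (T.erase v) ≤ ρstar * ((T.card : ℝ) - 1) := by
      rw [div_le_iff₀ (by rw [hcast]; exact hcpos)] at hub
      rw [← hcast]
      exact hub
    have heq : indWeight w T = ρstar * (T.card : ℝ) := by
      rw [hTρ]; field_simp
    nlinarith [hle, heq, hiw]
  · have hTv : T = {v} := by
      rcases (Finset.erase_eq_empty_iff T v).mp (Finset.not_nonempty_iff_eq_empty.mp he) with h | h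
      · exact absurd (h ▸ hv) (Finset.notMem_empty v)
      · exact h
    subst hTv
    have hz : ρstar = 0 := by
      rw [hTρ]; simp [indWeight, hdiag]
    simp [hz, hdiag]

/-- **Guarantee of the greedy peeling algorithm (Theorem 2).**
If every vertex `u` has negative degree `deg⁻(u) ≤ Δ`, then any run of the
peeling algorithm (the nested sequence `H 0 = V`, `H (i+1) = H i` minus a
vertex of minimum induced degree) contains an intermediate set whose density
is at least `ρ*/2 - Δ/2`, where `ρ*` is the maximum density over nonempty
vertex sets.  Hence the output (the densest `H i`) has density at least
`ρ*/2 - Δ/2`. -/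
theorem peeling_guarantee
    [Nonempty V]
    (w : V → V → ℝ) (hsymm : ∀ u v, w u v = w v u) (hdiag : ∀ v, w v v = 0)
    (Δ : ℝ) (hΔ : ∀ u : V, ∑ x : V, max (-(w u x)) 0 ≤ Δ)
    (H : ℕ → Finset V) (h0 : H 0 = Finset.univ)
    (hstep : ∀ i, i + 1 < Fintype.card V →
      ∃ v ∈ H i, (∀ x ∈ H i, dDeg w (H i) v ≤ dDeg w (H i) x) ∧
        H (i + 1) = (H i).erase v)
    (ρstar : ℝ)
    (hρ : IsGreatest {ρ : ℝ | ∃ T : Finset V, T.Nonempty ∧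
      ρ = indWeight w T / (T.card : ℝ)} ρstar) :
    ∃ i < Fintype.card V, (H i).Nonempty ∧
      ρstar / 2 - Δ / 2 ≤ indWeight w (H i) / ((H i).card : ℝ) := by
  set N := Fintype.card V with hNdef
  have hN : 0 < N := Fintype.card_pos
  obtain ⟨T, hTne, hTρ⟩ := hρ.1
  obtain ⟨v0⟩ := ‹Nonempty V›
  have hΔ0 : 0 ≤ Δ :=
    le_trans (Finset.sum_nonneg fun x _ => le_max_right _ _) (hΔ v0)
  have hρ0 : 0 ≤ ρstar := by
    have h0mem : (0:ℝ) ∈ {ρ : ℝ | ∃ T : Finset V, T.Nonempty ∧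
        ρ = indWeight w T / (T.card : ℝ)} :=
      ⟨{v0}, Finset.singleton_nonempty v0, by simp [indWeight, hdiag]⟩
    exact hρ.2 h0mem
  have hcard : ∀ i, i < N → (H i).card = N - i := by
    intro i
    induction i with
    | zero => intro _; simp [h0, hNdef]
    | succ k ih =>
      intro hk
      obtain ⟨v, hvmem, _, heq⟩ := hstep k hk
      rw [heq, Finset.card_erase_of_mem hvmem, ih (Nat.lt_of_succ_lt hk)]
      omega
  have hnonempty : ∀ i, i < N → (H i).Nonempty := by
    intro i hi
    apply Finset.card_pos.mp
    rw [hcard i hi]; omega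
  by_cases hc : T ⊆ H (N - 1)
  · refine ⟨N - 1, by omega, hnonempty _ (by omega), ?_⟩
    have hc1 : (H (N - 1)).card = 1 := by rw [hcard _ (by omega)]; omega
    have hTeq : T = H (N - 1) := Finset.eq_of_subset_of_card_le hc
      (by rw [hc1]; exact Finset.card_pos.mpr hTne)
    rw [← hTeq, ← hTρ]
    linarith
  · have hex : ∃ j, ¬ T ⊆ H j := ⟨N - 1, hc⟩
    set j := Nat.find hex with hjdef
    have hj0 : T ⊆ H 0 := h0 ▸ Finset.subset_univ T
    have hjpos : 0 < j := by
      rcases Nat.eq_zero_or_pos j with h | h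
      · exact absurd (h ▸ Nat.find_spec hex) (not_not.mpr hj0)
      · exact h
    have hjle : j ≤ N - 1 := Nat.find_le hc
    set i := j - 1 with hidef
    have hij : i + 1 = j := by omega
    have hTi : T ⊆ H i := not_not.mp (Nat.find_min hex (by omega))
    have hi1 : i + 1 < N := by omega
    obtain ⟨v, hvm, hmin, herase⟩ := hstep i hi1
    have hTj : ¬ T ⊆ H (i + 1) := hij ▸ Nat.find_spec hex
    have hvT : v ∈ T := by
      by_contra hvn
      apply hTj
      rw [herase]
      intro x hx
      exact Finset.mem_erase.mpr ⟨fun h => hvn (h ▸ hx), hTi hx⟩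
    have hkey : ∀ x ∈ H i, ρstar - Δ ≤ dDeg w (H i) x := by
      intro x hx
      refine le_trans ?_ (hmin x hx)
      have h1 : ρstar ≤ ∑ y ∈ T, w v y :=
        opt_vertex_deg w hsymm hdiag ρstar hρ T hTne hTρ v hvT
      have h3 : ∑ y ∈ T, w v y ≤ ∑ y ∈ T, max (w v y) 0 :=
        Finset.sum_le_sum fun y _ => le_max_left _ _
      have h4 : ∑ y ∈ T, max (w v y) 0 ≤ ∑ y ∈ H i, max (w v y) 0 :=
        Finset.sum_le_sum_of_subset_of_nonneg hTi fun y _ _ => le_max_right _ _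
      have h5 : ∑ y ∈ H i, max (-(w v y)) 0 ≤ Δ :=
        le_trans (Finset.sum_le_sum_of_subset_of_nonneg (Finset.subset_univ _)
          fun y _ _ => le_max_right _ _) (hΔ v)
      unfold dDeg
      linarith
    refine ⟨i, by omega, hnonempty _ (by omega), ?_⟩
    have hsum : ((H i).card : ℝ) * (ρstar - Δ) ≤ ∑ x ∈ H i, dDeg w (H i) x := by
      have h := Finset.card_nsmul_le_sum (H i) (dDeg w (H i)) (ρstar - Δ) hkey
      rwa [nsmul_eq_mul] at h
    have h2w : ∑ x ∈ H i, dDeg w (H i) x = 2 * indWeight w (H i) := by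
      rw [Finset.sum_congr rfl fun x _ => dDeg_eq w (H i) x]
      unfold indWeight; ring
    have hcpos : (0:ℝ) < ((H i).card : ℝ) := by
      exact_mod_cast Finset.card_pos.mpr (hnonempty _ (by omega))
    rw [le_div_iff₀ hcpos]
    nlinarith [hsum, h2w]
end

section
/- (Max-Cut to Positive-Cut gadget.) Let G(V,E,w) be a weighted graph on n ≥ 3 vertices, c ∈ ℝ, and u, v two distinct vertices. Form G' by adding, for every vertex x ∉ {u,v}, edges {u,x} and {v,x} of weight −d (added to any existing weight), and adding weight (n−2)d − c to the edge {u,v}. Suppose d > W + |c|, where W = Σ_{e∈E} |w(e)|. Then: (1) every partition (A,B) of V with u,v on the same side has cut_{G'}(A,B) ≤ cut_G(A,B) − d·(number of crossing gadget edges) < 0 whenever A,B are nonempty; and (2) for every partition (A,B) with u ∈ A, v ∈ B, cut_{G'}(A,B) = cut_G(A,B) − c. In particular G' has a partition with positive cut and u,v separated if and only if G has a cut of value greater than c separating u and v. -/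
/-- **Max-Cut to Positive-Cut gadget.**
Graph model: `w : V → V → ℝ` symmetric with zero diagonal on `n = |V| ≥ 3`
vertices (non-edges carry weight `0`), `u ≠ v` two distinct vertices, `c : ℝ`.
`w'` is the gadget graph: `w' u v = w u v + (n-2)d - c`; `w' u x = w u x - d`
and `w' v x = w v x - d` for `x ∉ {u,v}`; all other weights unchanged.
`d > W + |c|` where `W = (∑∑ |w|)/2` is the total absolute weight.
For a set `A`, `cut_H(A, Aᶜ) = ∑_{a∈A}∑_{b∉A} w_H a b`.  Then:
(1) if `u, v` are on the same side of a partition into nonempty parts, the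
gadget cut is at most `cut_G - d·(number of crossing gadget edges)` and is
negative; (2) if `u ∈ A`, `v ∉ A`, then `cut_{G'}(A,Aᶜ) = cut_G(A,Aᶜ) - c`.
In particular `G'` has a positive cut separating `u, v` iff `G` has a cut of
value `> c` separating `u, v`. -/
theorem maxcut_to_positive_cut_gadget
    {V : Type*} [Fintype V] [DecidableEq V]
    (w : V → V → ℝ) (hsymm : ∀ x y, w x y = w y x) (hdiag : ∀ x, w x x = 0)
    (hn : 3 ≤ Fintype.card V)
    (u v : V) (huv : u ≠ v) (c d : ℝ)
    (hd : (∑ x : V, ∑ y : V, |w x y|) / 2 + |c| < d)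
    (w' : V → V → ℝ) (hw'symm : ∀ x y, w' x y = w' y x)
    (h1 : w' u v = w u v + ((Fintype.card V : ℝ) - 2) * d - c)
    (h2 : ∀ x, x ≠ u → x ≠ v → w' u x = w u x - d)
    (h3 : ∀ x, x ≠ u → x ≠ v → w' v x = w v x - d)
    (h4 : ∀ x y, x ≠ u → x ≠ v → y ≠ u → y ≠ v → w' x y = w x y) :
    (∀ A : Finset V, u ∈ A → v ∈ A → Aᶜ.Nonempty →
      (∑ a ∈ A, ∑ b ∈ Aᶜ, w' a b ≤
        (∑ a ∈ A, ∑ b ∈ Aᶜ, w a b) - d * (2 * ((Aᶜ).card : ℝ)) ∧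
       ∑ a ∈ A, ∑ b ∈ Aᶜ, w' a b < 0))
    ∧
    (∀ A : Finset V, u ∉ A → v ∉ A → A.Nonempty →
      (∑ a ∈ A, ∑ b ∈ Aᶜ, w' a b ≤
        (∑ a ∈ A, ∑ b ∈ Aᶜ, w a b) - d * (2 * (A.card : ℝ)) ∧
       ∑ a ∈ A, ∑ b ∈ Aᶜ, w' a b < 0))
    ∧
    (∀ A : Finset V, u ∈ A → v ∉ A →
      ∑ a ∈ A, ∑ b ∈ Aᶜ, w' a b = (∑ a ∈ A, ∑ b ∈ Aᶜ, w a b) - c)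
    ∧
    ((∃ A : Finset V, u ∈ A ∧ v ∉ A ∧ 0 < ∑ a ∈ A, ∑ b ∈ Aᶜ, w' a b) ↔
     (∃ A : Finset V, u ∈ A ∧ v ∉ A ∧ c < ∑ a ∈ A, ∑ b ∈ Aᶜ, w a b)) := by
  classical
  have hT0 : (0:ℝ) ≤ ∑ x : V, ∑ y : V, |w x y| :=
    Finset.sum_nonneg fun x _ => Finset.sum_nonneg fun y _ => abs_nonneg _
  set T : ℝ := ∑ x : V, ∑ y : V, |w x y| with hTdef
  have hdpos : 0 < d := lt_of_le_of_lt (by positivity) hd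
  have cutle : ∀ A : Finset V, ∑ a ∈ A, ∑ b ∈ Aᶜ, w a b ≤ T / 2 := by
    intro A
    have hle : ∑ a ∈ A, ∑ b ∈ Aᶜ, w a b ≤ ∑ a ∈ A, ∑ b ∈ Aᶜ, |w a b| :=
      Finset.sum_le_sum fun a _ => Finset.sum_le_sum fun b _ => le_abs_self _
    have e3 : ∑ a ∈ Aᶜ, ∑ b ∈ A, |w a b| = ∑ a ∈ A, ∑ b ∈ Aᶜ, |w a b| := by
      rw [Finset.sum_comm]
      exact Finset.sum_congr rfl fun a _ => Finset.sum_congr rfl fun b _ => by rw [hsymm]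
    have eT : T = (∑ a ∈ A, ∑ b ∈ A, |w a b| + ∑ a ∈ A, ∑ b ∈ Aᶜ, |w a b|)
        + (∑ a ∈ Aᶜ, ∑ b ∈ A, |w a b| + ∑ a ∈ Aᶜ, ∑ b ∈ Aᶜ, |w a b|) := by
      rw [hTdef, ← Finset.sum_add_sum_compl A fun x => ∑ y : V, |w x y|]
      congr 1
      · rw [← Finset.sum_add_distrib]
        exact Finset.sum_congr rfl fun a _ => (Finset.sum_add_sum_compl A _).symm
      · rw [← Finset.sum_add_distrib]
        exact Finset.sum_congr rfl fun a _ => (Finset.sum_add_sum_compl A _).symm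
    have hp1 : (0:ℝ) ≤ ∑ a ∈ A, ∑ b ∈ A, |w a b| :=
      Finset.sum_nonneg fun _ _ => Finset.sum_nonneg fun _ _ => abs_nonneg _
    have hp2 : (0:ℝ) ≤ ∑ a ∈ Aᶜ, ∑ b ∈ Aᶜ, |w a b| :=
      Finset.sum_nonneg fun _ _ => Finset.sum_nonneg fun _ _ => abs_nonneg _
    linarith
  have decomp : ∀ A : Finset V, ∑ a ∈ A, ∑ b ∈ Aᶜ, w' a b
      = (∑ a ∈ A, ∑ b ∈ Aᶜ, w a b) + ∑ a ∈ A, ∑ b ∈ Aᶜ, (w' a b - w a b) := by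
    intro A
    rw [← Finset.sum_add_distrib]
    exact Finset.sum_congr rfl fun a _ => by
      rw [← Finset.sum_add_distrib]
      exact Finset.sum_congr rfl fun b _ => by ring
  have D1 : ∀ A : Finset V, u ∈ A → v ∈ A →
      ∑ a ∈ A, ∑ b ∈ Aᶜ, (w' a b - w a b) = -(d * (2 * ((Aᶜ).card : ℝ))) := by
    intro A hu hv
    have hsub : ({u, v} : Finset V) ⊆ A := by
      intro x hx
      simp only [Finset.mem_insert, Finset.mem_singleton] at hx
      rcases hx with rfl | rfl <;> assumption
    have hzero : ∀ a ∈ A, a ∉ ({u, v} : Finset V) →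
        ∑ b ∈ Aᶜ, (w' a b - w a b) = 0 := by
      intro a _ ha
      simp only [Finset.mem_insert, Finset.mem_singleton, not_or] at ha
      refine Finset.sum_eq_zero fun b hb => ?_
      have hbu : b ≠ u := fun h => (Finset.mem_compl.mp hb) (h ▸ hu)
      have hbv : b ≠ v := fun h => (Finset.mem_compl.mp hb) (h ▸ hv)
      rw [h4 a b ha.1 ha.2 hbu hbv]; ring
    rw [← Finset.sum_subset hsub hzero, Finset.sum_pair huv]
    have gu : ∑ b ∈ Aᶜ, (w' u b - w u b) = -(d * ((Aᶜ).card : ℝ)) := by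
      have hc : ∀ b ∈ Aᶜ, w' u b - w u b = -d := by
        intro b hb
        have hbu : b ≠ u := fun h => (Finset.mem_compl.mp hb) (h ▸ hu)
        have hbv : b ≠ v := fun h => (Finset.mem_compl.mp hb) (h ▸ hv)
        rw [h2 b hbu hbv]; ring
      rw [Finset.sum_congr rfl hc, Finset.sum_const, nsmul_eq_mul]; ring
    have gv : ∑ b ∈ Aᶜ, (w' v b - w v b) = -(d * ((Aᶜ).card : ℝ)) := by
      have hc : ∀ b ∈ Aᶜ, w' v b - w v b = -d := by
        intro b hb
        have hbu : b ≠ u := fun h => (Finset.mem_compl.mp hb) (h ▸ hu)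
        have hbv : b ≠ v := fun h => (Finset.mem_compl.mp hb) (h ▸ hv)
        rw [h3 b hbu hbv]; ring
      rw [Finset.sum_congr rfl hc, Finset.sum_const, nsmul_eq_mul]; ring
    rw [gu, gv]; ring
  have D2 : ∀ A : Finset V, u ∉ A → v ∉ A →
      ∑ a ∈ A, ∑ b ∈ Aᶜ, (w' a b - w a b) = -(d * (2 * (A.card : ℝ))) := by
    intro A hu hv
    have hsub : ({u, v} : Finset V) ⊆ Aᶜ := by
      intro x hx
      simp only [Finset.mem_insert, Finset.mem_singleton] at hx
      rcases hx with rfl | rfl <;> simp [Finset.mem_compl, hu, hv]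
    have hc : ∀ a ∈ A, ∑ b ∈ Aᶜ, (w' a b - w a b) = -(2*d) := by
      intro a ha
      have hau : a ≠ u := fun h => hu (h ▸ ha)
      have hav : a ≠ v := fun h => hv (h ▸ ha)
      have hzero : ∀ b ∈ Aᶜ, b ∉ ({u, v} : Finset V) → w' a b - w a b = 0 := by
        intro b _ hb
        simp only [Finset.mem_insert, Finset.mem_singleton, not_or] at hb
        rw [h4 a b hau hav hb.1 hb.2]; ring
      rw [← Finset.sum_subset hsub hzero, Finset.sum_pair huv]
      have e1 : w' a u - w a u = -d := by
        rw [hw'symm a u, h2 a hau hav, hsymm a u]; ring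
      have e2 : w' a v - w a v = -d := by
        rw [hw'symm a v, h3 a hau hav, hsymm a v]; ring
      rw [e1, e2]; ring
    rw [Finset.sum_congr rfl hc, Finset.sum_const, nsmul_eq_mul]; ring
  have D3 : ∀ A : Finset V, u ∈ A → v ∉ A →
      ∑ a ∈ A, ∑ b ∈ Aᶜ, (w' a b - w a b) = -c := by
    intro A hu hv
    have hvc : v ∈ Aᶜ := Finset.mem_compl.mpr hv
    have hcardc : (1:ℕ) ≤ (Aᶜ).card := Finset.card_pos.mpr ⟨v, hvc⟩
    have hcardA : (1:ℕ) ≤ A.card := Finset.card_pos.mpr ⟨u, hu⟩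
    have gu : ∑ b ∈ Aᶜ, (w' u b - w u b)
        = -(d * (((Aᶜ).card : ℝ) - 1)) + (((Fintype.card V : ℝ) - 2) * d - c) := by
      rw [← Finset.sum_erase_add _ _ hvc]
      have e1 : ∀ b ∈ (Aᶜ).erase v, w' u b - w u b = -d := by
        intro b hb
        obtain ⟨hbv, hbc⟩ := Finset.mem_erase.mp hb
        have hbu : b ≠ u := fun h => (Finset.mem_compl.mp hbc) (h ▸ hu)
        rw [h2 b hbu hbv]; ring
      rw [Finset.sum_congr rfl e1, Finset.sum_const, nsmul_eq_mul,
        Finset.card_erase_of_mem hvc, h1, Nat.cast_sub hcardc]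
      push_cast
      ring
    have ga : ∀ a ∈ A.erase u, ∑ b ∈ Aᶜ, (w' a b - w a b) = -d := by
      intro a ha
      obtain ⟨hau, haA⟩ := Finset.mem_erase.mp ha
      have hav : a ≠ v := fun h => hv (h ▸ haA)
      have hzero : ∀ b ∈ Aᶜ, b ∉ ({v} : Finset V) → w' a b - w a b = 0 := by
        intro b hbc hb
        have hbv : b ≠ v := by simpa using hb
        have hbu : b ≠ u := fun h => (Finset.mem_compl.mp hbc) (h ▸ hu)
        rw [h4 a b hau hav hbu hbv]; ring
      have hsub : ({v} : Finset V) ⊆ Aᶜ := Finset.singleton_subset_iff.mpr hvc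
      rw [← Finset.sum_subset hsub hzero, Finset.sum_singleton,
        hw'symm a v, h3 a hau hav, hsymm a v]
      ring
    rw [← Finset.sum_erase_add _ _ hu, Finset.sum_congr rfl ga, Finset.sum_const,
      nsmul_eq_mul, Finset.card_erase_of_mem hu, gu, Nat.cast_sub hcardA]
    have hcard : (A.card : ℝ) + ((Aᶜ).card : ℝ) = (Fintype.card V : ℝ) := by
      rw [← Nat.cast_add, Finset.card_add_card_compl]
    have hm : d * (A.card : ℝ) + d * ((Aᶜ).card : ℝ) = d * (Fintype.card V : ℝ) := by
      rw [← hcard]; ring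
    push_cast
    linarith
  refine ⟨?_, ?_, ?_, ?_⟩
  · intro A hu hv hne
    have hk : (1:ℝ) ≤ ((Aᶜ).card : ℝ) := by
      exact_mod_cast Finset.card_pos.mpr hne
    rw [decomp A, D1 A hu hv]
    constructor
    · linarith
    · nlinarith [cutle A, abs_nonneg c]
  · intro A hu hv hne
    have hk : (1:ℝ) ≤ (A.card : ℝ) := by
      exact_mod_cast Finset.card_pos.mpr hne
    rw [decomp A, D2 A hu hv]
    constructor
    · linarith
    · nlinarith [cutle A, abs_nonneg c]
  · intro A hu hv
    rw [decomp A, D3 A hu hv]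
    ring
  · constructor
    · rintro ⟨A, hu, hv, hpos⟩
      refine ⟨A, hu, hv, ?_⟩
      have h := decomp A
      rw [D3 A hu hv] at h
      linarith
    · rintro ⟨A, hu, hv, hpos⟩
      refine ⟨A, hu, hv, ?_⟩
      have h := decomp A
      rw [D3 A hu hv] at h
      linarith
end
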